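/- Let Φ : X × Y → ℝ and σ > 0. There exist unique functions u : X → ℝ, v : Y → ℝ and a unique constant c ∈ ℝ satisfying the normalizations Σ_x p(x) u(x) = 0 and Σ_y q(y) v(y) = 0, such that the function π defined by π(x,y) = p(x) q(y) exp((Φ(x,y) − u(x) − v(y) − c)/σ) belongs to M(p,q). -/

import Mathlib

open Finset Real

set_option linter.unusedSectionVars false

lemma exists_global_min {X : Type*} [Fintype X] [Nonempty X] (f : (X → ℝ) → ℝ)
    (hf : Continuous f) (R : ℝ) (hb : ∀ u, f u ≤ f 0 → ‖u‖ ≤ R) :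
    ∃ u, ∀ w, f u ≤ f w := by
  have hScl : IsClosed {u : X → ℝ | f u ≤ f 0} := isClosed_le hf continuous_const
  have hsub : {u : X → ℝ | f u ≤ f 0} ⊆ Metric.closedBall 0 R := by
    intro u hu; simpa [Metric.mem_closedBall, dist_eq_norm] using hb u hu
  have hK : IsCompact {u : X → ℝ | f u ≤ f 0} :=
    (isCompact_closedBall (0 : X → ℝ) R).of_isClosed_subset hScl hsub
  obtain ⟨u, hu, hmin⟩ := hK.exists_isMinOn ⟨0, by simp⟩ hf.continuousOn
  refine ⟨u, fun w => ?_⟩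
  by_cases hw : f w ≤ f 0
  · exact hmin hw
  · exact le_trans (hmin (by simp : (0 : X → ℝ) ∈ _)) (le_of_not_ge hw)

section Main
variable {X Y : Type*} [Fintype X] [Fintype Y] [Nonempty X] [Nonempty Y]
    (p : X → ℝ) (q : Y → ℝ) (hp : ∀ x, 0 < p x) (hq : ∀ y, 0 < q y)
    (hps : ∑ x, p x = 1) (hqs : ∑ y, q y = 1)
    (Φ : X × Y → ℝ) (σ : ℝ) (hσ : 0 < σ)

-- The partition function of column y given potentials u.
noncomputable def Zf (u : X → ℝ) (y : Y) : ℝ := ∑ x, p x * Real.exp ((Φ (x, y) - u x) / σ)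

include hp in
lemma Zf_pos (u : X → ℝ) (y : Y) : 0 < Zf p Φ σ u y :=
  Finset.sum_pos (fun x _ => mul_pos (hp x) (Real.exp_pos _)) univ_nonempty

-- regularized semi-dual
noncomputable def Hf (u : X → ℝ) : ℝ :=
  (∑ x, p x * u x) + (∑ y, q y * (σ * Real.log (Zf p Φ σ u y))) + (∑ x, p x * u x) ^ 2

include hp hσ in
lemma Hf_cont : Continuous (Hf p q Φ σ) := by
  have hZ : ∀ y : Y, Continuous fun u : X → ℝ => Zf p Φ σ u y := fun y =>
    continuous_finset_sum _ fun x _ =>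
      continuous_const.mul (Real.continuous_exp.comp
        (by fun_prop : Continuous fun u : X → ℝ => (Φ (x, y) - u x) / σ))
  have h1 : Continuous fun u : X → ℝ => ∑ x, p x * u x :=
    continuous_finset_sum _ fun x _ => continuous_const.mul (continuous_apply x)
  exact (h1.add (continuous_finset_sum _ fun y _ =>
    continuous_const.mul (continuous_const.mul
      ((hZ y).log fun u => (Zf_pos p hp Φ σ u y).ne')))).add (h1.pow 2)

include hp hq hqs hσ in
lemma Hf_lb (u : X → ℝ) (x : X) :
    σ * Real.log (p x) + (∑ y, q y * Φ (x, y)) + (∑ x', p x' * u x') - u x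
      + (∑ x', p x' * u x') ^ 2 ≤ Hf p q Φ σ u := by
  have key : ∀ y, σ * Real.log (p x) + (Φ (x, y) - u x) ≤ σ * Real.log (Zf p Φ σ u y) := by
    intro y
    have h1 : p x * Real.exp ((Φ (x, y) - u x) / σ) ≤ Zf p Φ σ u y :=
      Finset.single_le_sum (f := fun x' => p x' * Real.exp ((Φ (x', y) - u x') / σ))
        (fun x' _ => le_of_lt (mul_pos (hp x') (Real.exp_pos _))) (mem_univ x)
    have h2 : Real.log (p x) + (Φ (x, y) - u x) / σ ≤ Real.log (Zf p Φ σ u y) := by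
      have := Real.log_le_log (mul_pos (hp x) (Real.exp_pos _)) h1
      rwa [Real.log_mul (hp x).ne' (Real.exp_pos _).ne', Real.log_exp] at this
    have := mul_le_mul_of_nonneg_left h2 hσ.le
    rwa [mul_add, mul_div_cancel₀ _ hσ.ne'] at this
  have hsum : ∑ y, q y * (σ * Real.log (p x) + (Φ (x, y) - u x))
      ≤ ∑ y, q y * (σ * Real.log (Zf p Φ σ u y)) :=
    Finset.sum_le_sum fun y _ => mul_le_mul_of_nonneg_left (key y) (hq y).le
  have hexp : ∑ y, q y * (σ * Real.log (p x) + (Φ (x, y) - u x))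
      = σ * Real.log (p x) + (∑ y, q y * Φ (x, y)) - u x := by
    simp only [mul_add, mul_sub, Finset.sum_add_distrib, Finset.sum_sub_distrib,
      ← Finset.sum_mul, hqs, one_mul]
    ring
  unfold Hf
  nlinarith [hsum, hexp]


include hp hq hps hqs hσ in
lemma Hf_exists_min : ∃ u, ∀ w, Hf p q Φ σ u ≤ Hf p q Φ σ w := by
  classical
  set M := Hf p q Φ σ 0 with hM
  set Kmin := Finset.univ.inf' univ_nonempty
    (fun x => σ * Real.log (p x) + ∑ y, q y * Φ (x, y)) with hKmin
  have hKx : ∀ x, Kmin ≤ σ * Real.log (p x) + ∑ y, q y * Φ (x, y) := fun x =>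
    Finset.inf'_le _ (mem_univ x)
  set T := Real.sqrt (M - Kmin) with hT
  have hT0 : 0 ≤ T := Real.sqrt_nonneg _
  set Lb : ℝ := Kmin - T - M with hLb
  set Lb' : ℝ := min Lb 0 with hLb'
  have hLb'0 : Lb' ≤ 0 := min_le_right _ _
  set pmin := Finset.univ.inf' univ_nonempty p with hpmin
  have hpmin0 : 0 < pmin := by
    rw [hpmin, Finset.lt_inf'_iff]; exact fun x _ => hp x
  set R : ℝ := |Lb'| + (T + |Lb'|) / pmin with hR
  have hR0 : 0 ≤ R := add_nonneg (abs_nonneg _)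
    (div_nonneg (add_nonneg hT0 (abs_nonneg _)) hpmin0.le)
  apply exists_global_min _ (Hf_cont p q hp Φ σ hσ) R
  intro u hu
  rw [← hM] at hu
  have hlb := fun x => Hf_lb p q hp hq hqs Φ σ hσ u x
  set t := ∑ x, p x * u x with ht
  obtain ⟨x₀, hx₀⟩ : ∃ x₀, u x₀ ≤ t := by
    by_contra h
    push_neg at h
    have h1 : ∑ x, p x * t < ∑ x, p x * u x :=
      Finset.sum_lt_sum_of_nonempty univ_nonempty
        (fun x _ => mul_lt_mul_of_pos_left (h x) (hp x))
    rw [← Finset.sum_mul, hps, one_mul] at h1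
    exact lt_irrefl t (ht ▸ h1)
  have htsq : t ^ 2 ≤ M - Kmin := by
    have h3 := hlb x₀
    linarith [hKx x₀, hu, hx₀]
  have htab : |t| ≤ T := by
    rw [← Real.sqrt_sq_eq_abs, hT]
    exact Real.sqrt_le_sqrt htsq
  have htl : -T ≤ t := neg_le_of_abs_le htab
  have htu : t ≤ T := le_of_abs_le htab
  have hlow : ∀ x, Lb ≤ u x := by
    intro x
    have h3 := hlb x
    nlinarith [hKx x, hu, sq_nonneg t]
  have hlow' : ∀ x, Lb' ≤ u x := fun x => le_trans (min_le_left _ _) (hlow x)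
  have hup : ∀ x, u x ≤ (T + |Lb'|) / pmin := by
    intro x
    have hsplit : p x * u x + ∑ x' ∈ univ.erase x, p x' * u x' = t := by
      rw [ht]; exact Finset.add_sum_erase univ (fun x' => p x' * u x') (mem_univ x)
    have h2 : ∑ x' ∈ univ.erase x, p x' = 1 - p x := by
      rw [Finset.sum_erase_eq_sub (mem_univ x), hps]
    have hrest : (1 - p x) * Lb' ≤ ∑ x' ∈ univ.erase x, p x' * u x' := by
      have h1 : ∑ x' ∈ univ.erase x, p x' * Lb' ≤ ∑ x' ∈ univ.erase x, p x' * u x' :=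
        Finset.sum_le_sum fun x' _ => mul_le_mul_of_nonneg_left (hlow' x') (hp x').le
      rwa [← Finset.sum_mul, h2] at h1
    have hpx1 : p x ≤ 1 := by
      have h0 : (0:ℝ) ≤ ∑ x' ∈ univ.erase x, p x' :=
        Finset.sum_nonneg fun x' _ => (hp x').le
      linarith [h2 ▸ h0]
    have hmul : p x * u x ≤ T + |Lb'| := by
      have h3 : Lb' ≤ (1 - p x) * Lb' := by nlinarith [hp x, hLb'0]
      have h4 : -|Lb'| ≤ Lb' := neg_abs_le _
      linarith
    have h4 : u x ≤ (T + |Lb'|) / p x := by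
      rw [le_div_iff₀ (hp x)]; linarith [mul_comm (p x) (u x)]
    refine h4.trans ?_
    apply div_le_div_of_nonneg_left (add_nonneg hT0 (abs_nonneg _)) hpmin0
    exact Finset.inf'_le p (mem_univ x)
  rw [pi_norm_le_iff_of_nonneg hR0]
  intro x
  rw [Real.norm_eq_abs, abs_le]
  have h5 : 0 ≤ (T + |Lb'|) / pmin :=
    div_nonneg (add_nonneg hT0 (abs_nonneg _)) hpmin0.le
  have h6 : -|Lb'| ≤ Lb' := neg_abs_le _
  constructor
  · have h7 : -R ≤ -|Lb'| := by rw [hR]; linarith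
    linarith [hlow' x]
  · have h8 : (T + |Lb'|) / pmin ≤ R := by rw [hR]; linarith [abs_nonneg Lb']
    exact le_trans (hup x) h8


include hp hq hps hqs hσ in
lemma exists_potentials : ∃ u : X → ℝ, (∑ x, p x * u x = 0) ∧
    ∀ x, ∑ y, q y * (Real.exp ((Φ (x, y) - u x) / σ) / Zf p Φ σ u y) = 1 := by
  classical
  obtain ⟨u, hmin⟩ := Hf_exists_min p q hp hq hps hqs Φ σ hσ
  set t := ∑ x, p x * u x with ht
  -- first-order conditions
  have key : ∀ x₀ : X,
      ∑ y, q y * (Real.exp ((Φ (x₀, y) - u x₀) / σ) / Zf p Φ σ u y) = 1 + 2 * t := by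
    intro x₀
    set w : ℝ → X → ℝ := fun s x => u x + (if x = x₀ then s else 0) with hw
    have hw0 : w 0 = u := by funext x; simp [hw]
    have hwA : ∀ s, ∑ x, p x * w s x = t + p x₀ * s := by
      intro s
      simp only [hw, mul_add, Finset.sum_add_distrib, mul_ite, mul_zero, ← ht,
        Finset.sum_ite_eq' univ x₀ (fun x => p x * s)]
      simp
    -- derivative of each partition function
    have hZy : ∀ y : Y, HasDerivAt (fun s => Zf p Φ σ (w s) y)
        (∑ x, if x = x₀ then p x₀ * (Real.exp ((Φ (x₀, y) - (u x₀ + 0)) / σ) * (-(1 : ℝ) / σ)) else 0) 0 := by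
      intro y
      unfold Zf
      apply HasDerivAt.fun_sum
      intro x _
      simp only [hw]
      by_cases hx : x = x₀
      · subst hx
        simp only [if_pos rfl]
        have hinner : HasDerivAt (fun s : ℝ => (Φ (x, y) - (u x + s)) / σ) (-(1 : ℝ) / σ) 0 := by
          have h1 : HasDerivAt (fun s : ℝ => u x + s) 1 0 := (hasDerivAt_id 0).const_add (u x)
          have h2 := (h1.const_sub (Φ (x, y))).div_const σ
          simpa using h2
        simpa [mul_assoc] using (hinner.exp.const_mul (p x))
      · simp only [if_neg hx]
        simpa [hx] using (hasDerivAt_const (0:ℝ) (p x * Real.exp ((Φ (x, y) - (u x + 0)) / σ)))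
    have hZne : ∀ y, Zf p Φ σ (w 0) y ≠ 0 := by
      intro y; rw [hw0]; exact (Zf_pos p hp Φ σ u y).ne'
    -- derivative of the affine part
    have hA : HasDerivAt (fun s => ∑ x, p x * w s x) (p x₀) 0 := by
      have : (fun s => ∑ x, p x * w s x) = fun s => t + p x₀ * s := funext hwA
      rw [this]
      simpa using ((hasDerivAt_id (0:ℝ)).const_mul (p x₀)).const_add t
    -- full derivative
    have hφ : HasDerivAt (fun s => Hf p q Φ σ (w s))
        ((p x₀ + ∑ y, q y * (σ * ((∑ x, if x = x₀ then p x₀ * (Real.exp ((Φ (x₀, y) - (u x₀ + 0)) / σ) * (-(1 : ℝ) / σ)) else 0) / Zf p Φ σ (w 0) y))) + 2 * (∑ x, p x * w 0 x) ^ 1 * p x₀) 0 := by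
      apply HasDerivAt.add
      apply HasDerivAt.add hA
      · apply HasDerivAt.fun_sum
        intro y _
        exact (((hZy y).log (hZne y)).const_mul σ).const_mul (q y)
      · have h2 := hA.fun_pow 2
        norm_num at h2
        exact h2.congr_deriv (by ring)
    have hloc : IsLocalMin (fun s => Hf p q Φ σ (w s)) 0 :=
      Filter.Eventually.of_forall (fun s => by simpa [hw0] using hmin (w s))
    have hD := hloc.hasDerivAt_eq_zero hφ
    -- simplify
    rw [hw0] at hD
    have hsimp : ∀ y, q y * (σ * ((∑ x, if x = x₀ then p x₀ * (Real.exp ((Φ (x₀, y) - (u x₀ + 0)) / σ) * (-(1 : ℝ) / σ)) else 0) / Zf p Φ σ u y))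
        = -(p x₀ * (q y * (Real.exp ((Φ (x₀, y) - u x₀) / σ) / Zf p Φ σ u y))) := by
      intro y
      rw [Finset.sum_ite_eq' univ x₀]
      simp only [mem_univ, if_true, add_zero]
      field_simp [hσ.ne', (Zf_pos p hp Φ σ u y).ne']
    rw [Finset.sum_congr rfl (fun y _ => hsimp y)] at hD
    rw [Finset.sum_neg_distrib, ← Finset.mul_sum, ← ht] at hD
    set S := ∑ y, q y * (Real.exp ((Φ (x₀, y) - u x₀) / σ) / Zf p Φ σ u y) with hS
    have h2 : p x₀ * (1 + 2 * t - S) = 0 := by linear_combination hD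
    rcases mul_eq_zero.mp h2 with h3 | h3
    · exact absurd h3 (hp x₀).ne'
    · linarith
  -- sum the first-order conditions against p to show t = 0
  have hsum : ∑ x, p x * (∑ y, q y * (Real.exp ((Φ (x, y) - u x) / σ) / Zf p Φ σ u y)) = 1 := by
    simp only [Finset.mul_sum]
    rw [Finset.sum_comm]
    have hy : ∀ y, ∑ x, p x * (q y * (Real.exp ((Φ (x, y) - u x) / σ) / Zf p Φ σ u y)) = q y := by
      intro y
      have hZ := (Zf_pos p hp Φ σ u y).ne'
      calc ∑ x, p x * (q y * (Real.exp ((Φ (x, y) - u x) / σ) / Zf p Φ σ u y))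
          = (q y / Zf p Φ σ u y) * ∑ x, p x * Real.exp ((Φ (x, y) - u x) / σ) := by
            rw [Finset.mul_sum]; exact Finset.sum_congr rfl fun x _ => by ring
        _ = (q y / Zf p Φ σ u y) * Zf p Φ σ u y := rfl
        _ = q y := div_mul_cancel₀ _ hZ
    rw [Finset.sum_congr rfl fun y _ => hy y, hqs]
  have ht0 : t = 0 := by
    have h1 : ∑ x, p x * (∑ y, q y * (Real.exp ((Φ (x, y) - u x) / σ) / Zf p Φ σ u y))
        = ∑ x, p x * (1 + 2 * t) := Finset.sum_congr rfl fun x _ => by rw [key x]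
    rw [hsum, ← Finset.sum_mul, hps, one_mul] at h1
    linarith
  refine ⟨u, by rw [← ht]; exact ht0, fun x => by rw [key x, ht0]; ring⟩


include hp hq hps hqs hσ in
lemma schrodinger_uniq (u u' : X → ℝ) (v v' : Y → ℝ) (c c' : ℝ)
    (hu : ∑ x, p x * u x = 0) (hu' : ∑ x, p x * u' x = 0)
    (hv : ∑ y, q y * v y = 0) (hv' : ∑ y, q y * v' y = 0)
    (hrow : ∀ x, ∑ y, p x * q y * Real.exp ((Φ (x, y) - u x - v y - c) / σ) = p x)
    (hcol : ∀ y, ∑ x, p x * q y * Real.exp ((Φ (x, y) - u x - v y - c) / σ) = q y)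
    (hrow' : ∀ x, ∑ y, p x * q y * Real.exp ((Φ (x, y) - u' x - v' y - c') / σ) = p x)
    (hcol' : ∀ y, ∑ x, p x * q y * Real.exp ((Φ (x, y) - u' x - v' y - c') / σ) = q y) :
    u = u' ∧ v = v' ∧ c = c' := by
  set μ : X × Y → ℝ := fun z => p z.1 * q z.2 * Real.exp ((Φ z - u z.1 - v z.2 - c) / σ) with hμ
  set μ' : X × Y → ℝ := fun z => p z.1 * q z.2 * Real.exp ((Φ z - u' z.1 - v' z.2 - c') / σ) with hμ'
  set g : X → ℝ := fun x => (u x - u' x) / σ with hg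
  set h : Y → ℝ := fun y => (v y - v' y) / σ with hh
  set k : ℝ := (c - c') / σ with hk
  have hμpos : ∀ z, 0 < μ z := fun z =>
    mul_pos (mul_pos (hp z.1) (hq z.2)) (Real.exp_pos _)
  have hrel : ∀ z : X × Y, μ' z = μ z * Real.exp (g z.1 + h z.2 + k) := by
    intro z
    simp only [hμ, hμ', hg, hh, hk, mul_assoc, ← Real.exp_add]
    congr 2
    field_simp
    ring
  have hrel' : ∀ z : X × Y, μ z = μ' z * Real.exp (-(g z.1 + h z.2 + k)) := by
    intro z
    rw [hrel z, mul_assoc, ← Real.exp_add, add_neg_cancel, Real.exp_zero, mul_one]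
  -- total masses
  have hμtot : ∑ z : X × Y, μ z = 1 := by
    rw [Fintype.sum_prod_type]
    calc ∑ x, ∑ y, μ (x, y) = ∑ x, p x := Finset.sum_congr rfl fun x _ => hrow x
      _ = 1 := hps
  have hμtot' : ∑ z : X × Y, μ' z = 1 := by
    rw [Fintype.sum_prod_type]
    calc ∑ x, ∑ y, μ' (x, y) = ∑ x, p x := Finset.sum_congr rfl fun x _ => hrow' x
      _ = 1 := hps
  -- expectation of g + h + k under μ is k, and under μ' is k
  have hgsum : ∑ x, p x * g x = 0 := by
    simp only [hg]
    have e : ∀ x, p x * ((u x - u' x) / σ) = (p x * u x - p x * u' x) / σ := fun x => by ring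
    rw [Finset.sum_congr rfl fun x _ => e x, ← Finset.sum_div, Finset.sum_sub_distrib, hu, hu']
    simp
  have hhsum : ∑ y, q y * h y = 0 := by
    simp only [hh]
    have e : ∀ y, q y * ((v y - v' y) / σ) = (q y * v y - q y * v' y) / σ := fun y => by ring
    rw [Finset.sum_congr rfl fun y _ => e y, ← Finset.sum_div, Finset.sum_sub_distrib, hv, hv']
    simp
  have hmean : ∀ (ν : X × Y → ℝ), (∀ x, ∑ y, ν (x, y) = p x) → (∀ y, ∑ x, ν (x, y) = q y) →
      ∑ z : X × Y, ν z * (g z.1 + h z.2 + k) = k := by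
    intro ν hr hc
    have e1 : ∑ z : X × Y, ν z * g z.1 = 0 := by
      rw [Fintype.sum_prod_type]
      have : ∀ x, ∑ y, ν (x, y) * g x = p x * g x := by
        intro x; rw [← Finset.sum_mul, hr x]
      rw [Finset.sum_congr rfl fun x _ => this x]
      exact hgsum
    have e2 : ∑ z : X × Y, ν z * h z.2 = 0 := by
      rw [Fintype.sum_prod_type_right]
      have : ∀ y, ∑ x, ν (x, y) * h y = q y * h y := by
        intro y; rw [← Finset.sum_mul, hc y]
      rw [Finset.sum_congr rfl fun y _ => this y]
      exact hhsum
    have e3 : ∑ z : X × Y, ν z * k = k := by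
      rw [← Finset.sum_mul]
      have : ∑ z : X × Y, ν z = 1 := by
        rw [Fintype.sum_prod_type]
        calc ∑ x, ∑ y, ν (x, y) = ∑ x, p x := Finset.sum_congr rfl fun x _ => hr x
          _ = 1 := hps
      rw [this, one_mul]
    calc ∑ z : X × Y, ν z * (g z.1 + h z.2 + k)
        = (∑ z : X × Y, ν z * g z.1) + (∑ z : X × Y, ν z * h z.2) + ∑ z : X × Y, ν z * k := by
          simp [mul_add, Finset.sum_add_distrib]
      _ = k := by rw [e1, e2, e3]; ring
  have hmeanμ := hmean μ (fun x => hrow x) (fun y => hcol y)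
  have hmeanμ' := hmean μ' (fun x => hrow' x) (fun y => hcol' y)
  -- Gibbs inequality both ways gives k = 0
  have hk0 : k = 0 := by
    have h1 : ∑ z : X × Y, μ z * (g z.1 + h z.2 + k)
        ≤ ∑ z : X × Y, μ z * (Real.exp (g z.1 + h z.2 + k) - 1) := by
      apply Finset.sum_le_sum
      intro z _
      apply mul_le_mul_of_nonneg_left _ (hμpos z).le
      linarith [Real.add_one_le_exp (g z.1 + h z.2 + k)]
    have h2 : ∑ z : X × Y, μ z * (Real.exp (g z.1 + h z.2 + k) - 1)
        = ∑ z : X × Y, μ' z - ∑ z : X × Y, μ z := by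
      rw [← Finset.sum_sub_distrib]
      apply Finset.sum_congr rfl
      intro z _
      rw [hrel z]; ring
    have h3 : k ≤ 0 := by rw [hmeanμ, h2, hμtot, hμtot'] at h1; linarith
    have h1' : ∑ z : X × Y, μ' z * (-(g z.1 + h z.2 + k))
        ≤ ∑ z : X × Y, μ' z * (Real.exp (-(g z.1 + h z.2 + k)) - 1) := by
      apply Finset.sum_le_sum
      intro z _
      apply mul_le_mul_of_nonneg_left _ (le_of_lt (mul_pos (mul_pos (hp z.1) (hq z.2)) (Real.exp_pos _)) : (0:ℝ) ≤ μ' z)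
      linarith [Real.add_one_le_exp (-(g z.1 + h z.2 + k))]
    have h2' : ∑ z : X × Y, μ' z * (Real.exp (-(g z.1 + h z.2 + k)) - 1)
        = ∑ z : X × Y, μ z - ∑ z : X × Y, μ' z := by
      rw [← Finset.sum_sub_distrib]
      apply Finset.sum_congr rfl
      intro z _
      rw [hrel' z]; ring
    have h4 : ∑ z : X × Y, μ' z * (-(g z.1 + h z.2 + k)) = -k := by
      have : ∑ z : X × Y, μ' z * (-(g z.1 + h z.2 + k))
          = -∑ z : X × Y, μ' z * (g z.1 + h z.2 + k) := by
        rw [← Finset.sum_neg_distrib]; apply Finset.sum_congr rfl; intro z _; ring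
      rw [this, hmeanμ']
    have h5 : -k ≤ 0 := by rw [h4, h2', hμtot, hμtot'] at h1'; linarith
    linarith
  -- equality case: all exponents vanish
  have hzero : ∀ z : X × Y, g z.1 + h z.2 + k = 0 := by
    have hsum0 : ∑ z : X × Y, μ z * (Real.exp (g z.1 + h z.2 + k) - 1 - (g z.1 + h z.2 + k)) = 0 := by
      have e1 : ∑ z : X × Y, μ z * (Real.exp (g z.1 + h z.2 + k) - 1)
          = ∑ z : X × Y, μ' z - ∑ z : X × Y, μ z := by
        rw [← Finset.sum_sub_distrib]
        apply Finset.sum_congr rfl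
        intro z _
        rw [hrel z]; ring
      have expand : ∑ z : X × Y, μ z * (Real.exp (g z.1 + h z.2 + k) - 1 - (g z.1 + h z.2 + k))
          = (∑ z : X × Y, μ z * (Real.exp (g z.1 + h z.2 + k) - 1))
            - ∑ z : X × Y, μ z * (g z.1 + h z.2 + k) := by
        rw [← Finset.sum_sub_distrib]
        apply Finset.sum_congr rfl
        intro z _
        ring
      rw [expand, e1, hμtot, hμtot', hmeanμ, hk0]
      ring
    intro z
    have hterm : μ z * (Real.exp (g z.1 + h z.2 + k) - 1 - (g z.1 + h z.2 + k)) = 0 := by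
      have hnn : ∀ w ∈ (univ : Finset (X × Y)),
          0 ≤ μ w * (Real.exp (g w.1 + h w.2 + k) - 1 - (g w.1 + h w.2 + k)) := by
        intro w _
        apply mul_nonneg (hμpos w).le
        linarith [Real.add_one_le_exp (g w.1 + h w.2 + k)]
      exact (Finset.sum_eq_zero_iff_of_nonneg hnn).mp hsum0 z (mem_univ z)
    by_contra hne
    have := Real.add_one_lt_exp hne
    have h6 : 0 < Real.exp (g z.1 + h z.2 + k) - 1 - (g z.1 + h z.2 + k) := by linarith
    have := mul_pos (hμpos z) h6
    rw [hterm] at this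
    exact lt_irrefl 0 this
  -- conclude
  have hσ' : σ ≠ 0 := hσ.ne'
  have hceq : c = c' := by
    have : (c - c') / σ = 0 := hk0
    field_simp at this
    linarith
  have hgh : ∀ x y, g x + h y = 0 := by
    intro x y
    have := hzero (x, y)
    rw [hk0] at this
    simpa using this
  have hhconst : ∀ y, h y = 0 := by
    intro y
    have h7 : ∀ x, g x = -h y := fun x => by linarith [hgh x y]
    have h8 : ∑ x, p x * g x = ∑ x, p x * (-h y) := Finset.sum_congr rfl fun x _ => by rw [h7 x]
    rw [hgsum, ← Finset.sum_mul, hps, one_mul] at h8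
    linarith
  have hgconst : ∀ x, g x = 0 := by
    intro x
    obtain ⟨y⟩ := ‹Nonempty Y›
    have := hgh x y
    rw [hhconst y] at this
    linarith
  refine ⟨funext fun x => ?_, funext fun y => ?_, hceq⟩
  · have := hgconst x
    rw [hg] at this
    field_simp at this
    linarith
  · have := hhconst y
    rw [hh] at this
    field_simp at this
    linarith

end Main

/-- A coupling of the probability mass functions `p` and `q`. -/
def IsCoupling {X Y : Type*} [Fintype X] [Fintype Y]
    (p : X → ℝ) (q : Y → ℝ) (μ : X × Y → ℝ) : Prop :=
  (∀ z, 0 ≤ μ z) ∧ (∀ x, ∑ y, μ (x, y) = p x) ∧ (∀ y, ∑ x, μ (x, y) = q y)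

/-- Mutual information of a coupling (with `0 log 0 = 0`, which holds since `Real.log 0 = 0`). -/
noncomputable def mutualInfo {X Y : Type*} [Fintype X] [Fintype Y]
    (p : X → ℝ) (q : Y → ℝ) (μ : X × Y → ℝ) : ℝ :=
  ∑ x, ∑ y, μ (x, y) * Real.log (μ (x, y) / (p x * q y))

/-- Shannon entropy of a probability mass function. -/
noncomputable def entropy {Z : Type*} [Fintype Z] (p : Z → ℝ) : ℝ :=
  -∑ z, p z * Real.log (p z)

theorem schrodinger_system_exists_unique
    {X Y : Type*} [Fintype X] [Fintype Y] [Nonempty X] [Nonempty Y]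
    (p : X → ℝ) (q : Y → ℝ) (hp : ∀ x, 0 < p x) (hq : ∀ y, 0 < q y)
    (hps : ∑ x, p x = 1) (hqs : ∑ y, q y = 1)
    (Φ : X × Y → ℝ) (σ : ℝ) (hσ : 0 < σ) :
    ∃! uvc : (X → ℝ) × (Y → ℝ) × ℝ,
      (∑ x, p x * uvc.1 x = 0) ∧ (∑ y, q y * uvc.2.1 y = 0) ∧
      IsCoupling p q (fun z =>
        p z.1 * q z.2 * Real.exp ((Φ z - uvc.1 z.1 - uvc.2.1 z.2 - uvc.2.2) / σ)) := by
  classical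
  obtain ⟨u, hu0, hrow⟩ := exists_potentials p q hp hq hps hqs Φ σ hσ
  set v₀ : Y → ℝ := fun y => σ * Real.log (Zf p Φ σ u y) with hv₀
  set c : ℝ := ∑ y, q y * v₀ y with hc
  set v : Y → ℝ := fun y => v₀ y - c with hv
  have hZpos := fun y => Zf_pos p hp Φ σ u y
  have hexp : ∀ x y, Real.exp ((Φ (x, y) - u x - v y - c) / σ)
      = Real.exp ((Φ (x, y) - u x) / σ) / Zf p Φ σ u y := by
    intro x y
    have h1 : (Φ (x, y) - u x - v y - c) / σ
        = (Φ (x, y) - u x) / σ - Real.log (Zf p Φ σ u y) := by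
      simp only [hv, hv₀]
      field_simp
      ring
    rw [h1, Real.exp_sub, Real.exp_log (hZpos y)]
  have hvnorm : ∑ y, q y * v y = 0 := by
    simp only [hv, mul_sub]
    rw [Finset.sum_sub_distrib, ← Finset.sum_mul, hqs, one_mul, ← hc, sub_self]
  have hrowW : ∀ x, ∑ y, p x * q y * Real.exp ((Φ (x, y) - u x - v y - c) / σ) = p x := by
    intro x
    have e : ∀ y, p x * q y * Real.exp ((Φ (x, y) - u x - v y - c) / σ)
        = p x * (q y * (Real.exp ((Φ (x, y) - u x) / σ) / Zf p Φ σ u y)) := by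
      intro y; rw [hexp]; ring
    rw [Finset.sum_congr rfl fun y _ => e y, ← Finset.mul_sum, hrow x, mul_one]
  have hcolW : ∀ y, ∑ x, p x * q y * Real.exp ((Φ (x, y) - u x - v y - c) / σ) = q y := by
    intro y
    have e : ∀ x, p x * q y * Real.exp ((Φ (x, y) - u x - v y - c) / σ)
        = (q y / Zf p Φ σ u y) * (p x * Real.exp ((Φ (x, y) - u x) / σ)) := by
      intro x; rw [hexp]; ring
    calc ∑ x, p x * q y * Real.exp ((Φ (x, y) - u x - v y - c) / σ)
        = (q y / Zf p Φ σ u y) * ∑ x, p x * Real.exp ((Φ (x, y) - u x) / σ) := by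
          rw [Finset.sum_congr rfl fun x _ => e x, ← Finset.mul_sum]
      _ = (q y / Zf p Φ σ u y) * Zf p Φ σ u y := rfl
      _ = q y := div_mul_cancel₀ _ (hZpos y).ne'
  refine ⟨⟨u, v, c⟩, ⟨hu0, hvnorm, ?_, ?_, ?_⟩, ?_⟩
  · intro z
    exact le_of_lt (mul_pos (mul_pos (hp z.1) (hq z.2)) (Real.exp_pos _))
  · intro x; simpa using hrowW x
  · intro y; simpa using hcolW y
  · rintro ⟨u', v', c'⟩ ⟨h1, h2, h3, h4, h5⟩
    have h4' : ∀ x, ∑ y, p x * q y * Real.exp ((Φ (x, y) - u' x - v' y - c') / σ) = p x := by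
      intro x; simpa using h4 x
    have h5' : ∀ y, ∑ x, p x * q y * Real.exp ((Φ (x, y) - u' x - v' y - c') / σ) = q y := by
      intro y; simpa using h5 y
    obtain ⟨e1, e2, e3⟩ := schrodinger_uniq p q hp hq hps hqs Φ σ hσ
      u' u v' v c' c h1 hu0 h2 hvnorm h4' h5' hrowW hcolW
    simp only [Prod.mk.injEq]
    exact ⟨e1, e2, e3⟩
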